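/- Density lower bound forcing ε ≥ d/q for total-degree-d polynomials: if there exists a finite (1-ε)-tester for the class P(F_q,n,d) of polynomials of total degree ≤ d from F_{q^t} (t ≥ 2) to F_q, then ε ≥ d/q. Proof idea: for α ∈ F_{q^t}\F_q and any finite multiset S ⊆ F_q, there exist β₁,...,β_d ∈ F_q such that the product (x−β₁)···(x−β_d), which is nonzero at α, vanishes on at least a d/q fraction of S. -/

import Mathlib

open Finset in
lemma top_d_sum {α : Type*} [DecidableEq α] [Fintype α] (f : α → ℕ) (d : ℕ)
    (hd : d ≤ Fintype.card α) :
    ∃ S : Finset α, S.card = d ∧ d * ∑ β, f β ≤ Fintype.card α * ∑ β ∈ S, f β := by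
  obtain ⟨S, hSmem, hmax⟩ := Finset.exists_max_image ((Finset.univ : Finset α).powersetCard d)
    (fun T => ∑ β ∈ T, f β)
    (Finset.powersetCard_nonempty.mpr (by simpa using hd))
  have hScard : S.card = d := (Finset.mem_powersetCard.mp hSmem).2
  refine ⟨S, hScard, ?_⟩
  have claim : ∀ γ ∉ S, ∀ β ∈ S, f γ ≤ f β := by
    intro γ hγ β hβ
    by_contra h
    push_neg at h
    set S' := insert γ (S.erase β) with hS'
    have hγ' : γ ∉ S.erase β := fun hmem => hγ (Finset.mem_of_mem_erase hmem)
    have hcard' : S'.card = d := by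
      rw [hS', Finset.card_insert_of_notMem hγ', Finset.card_erase_of_mem hβ, hScard]
      have : 1 ≤ d := hScard ▸ Finset.card_pos.mpr ⟨β, hβ⟩
      omega
    have hmem' : S' ∈ (Finset.univ : Finset α).powersetCard d :=
      Finset.mem_powersetCard.mpr ⟨Finset.subset_univ _, hcard'⟩
    have hsum' : ∑ x ∈ S', f x = f γ + ∑ x ∈ S.erase β, f x :=
      Finset.sum_insert hγ'
    have hsum : ∑ x ∈ S, f x = f β + ∑ x ∈ S.erase β, f x :=
      (Finset.add_sum_erase S f hβ).symm
    have := hmax S' hmem'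
    simp only [hsum', hsum] at this
    omega
  have key : d * ∑ γ ∈ Sᶜ, f γ ≤ Sᶜ.card * ∑ β ∈ S, f β := by
    calc d * ∑ γ ∈ Sᶜ, f γ = ∑ γ ∈ Sᶜ, ∑ _β ∈ S, f γ := by
          simp [Finset.sum_const, hScard, Finset.mul_sum, mul_comm]
      _ ≤ ∑ γ ∈ Sᶜ, ∑ β ∈ S, f β := by
          refine Finset.sum_le_sum fun γ hγ => Finset.sum_le_sum fun β hβ => ?_
          exact claim γ (by simpa using hγ) β hβ
      _ = Sᶜ.card * ∑ β ∈ S, f β := by simp [Finset.sum_const, mul_comm]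
  have hcompl : Sᶜ.card = Fintype.card α - d := by
    rw [Finset.card_compl, hScard]
  calc d * ∑ β, f β = d * (∑ β ∈ S, f β + ∑ β ∈ Sᶜ, f β) := by
        rw [Finset.sum_add_sum_compl]
    _ = d * ∑ β ∈ S, f β + d * ∑ β ∈ Sᶜ, f β := mul_add _ _ _
    _ ≤ d * ∑ β ∈ S, f β + (Fintype.card α - d) * ∑ β ∈ S, f β := by
        rw [← hcompl]; exact Nat.add_le_add_left key _
    _ = (d + (Fintype.card α - d)) * ∑ β ∈ S, f β := (add_mul _ _ _).symm
    _ = Fintype.card α * ∑ β ∈ S, f β := by rw [Nat.add_sub_cancel' hd]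

set_option maxHeartbeats 1000000 in
open Classical in
/-- Density lower bound forcing `ε ≥ d/q` for total-degree-`d` polynomials: if there
exists a finite nonempty `(1-ε)`-tester (with `0 ≤ ε < 1`) for the class `P(F_q,n,d)`
of multivariate polynomials of total degree at most `d` from `F_{q^t}` (`t ≥ 2`) to
`F_q`, then `ε ≥ d/q`. -/
theorem density_lower_bound_total_degree {F K : Type*} [Field F] [Fintype F]
    [Field K] [Fintype K] [Algebra F K]
    (n t d : ℕ) (hn : 0 < n) (ht : 2 ≤ t)
    (hK : Fintype.card K = Fintype.card F ^ t)
    (ε : ℝ) (hε0 : 0 ≤ ε) (hε1 : ε < 1)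
    (L : Finset ((Fin n → K) → (Fin n → F))) (hL : L.Nonempty)
    (htester : ∀ f : MvPolynomial (Fin n) F, f.totalDegree ≤ d →
      ∀ a : Fin n → K, MvPolynomial.aeval a f ≠ 0 →
        (1 - ε) * (L.card : ℝ) ≤
          ((L.filter fun l => MvPolynomial.eval (l a) f ≠ 0).card : ℝ)) :
    (d : ℝ) / (Fintype.card F : ℝ) ≤ ε := by
  set q := Fintype.card F with hq
  have hq1 : 1 < q := Fintype.one_lt_card
  have hq0 : (0 : ℝ) < (q : ℝ) := by exact_mod_cast Nat.lt_of_lt_of_le Nat.zero_lt_one hq1.le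
  -- find α ∈ K not in the image of F
  have himg : ((Finset.univ : Finset F).image (algebraMap F K)).card < Fintype.card K := by
    calc ((Finset.univ : Finset F).image (algebraMap F K)).card
        ≤ (Finset.univ : Finset F).card := Finset.card_image_le
      _ = q := by simp [hq]
      _ < q ^ t := by
          calc q = q ^ 1 := (pow_one q).symm
            _ < q ^ t := Nat.pow_lt_pow_right hq1 (by omega)
      _ = Fintype.card K := hK.symm
  have hexα : ∃ α : K, α ∉ (Finset.univ : Finset F).image (algebraMap F K) := by
    by_contra h
    push_neg at h
    have hsub : (Finset.univ : Finset K) ⊆ (Finset.univ : Finset F).image (algebraMap F K) :=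
      fun x _ => h x
    have := Finset.card_le_card hsub
    simp only [Finset.card_univ] at this
    omega
  obtain ⟨α, hα⟩ := hexα
  have hα' : ∀ β : F, algebraMap F K β ≠ α := by
    intro β hβ
    exact hα (Finset.mem_image.mpr ⟨β, Finset.mem_univ β, hβ⟩)
  set i0 : Fin n := ⟨0, hn⟩
  set a : Fin n → K := fun _ => α with ha
  set e := min d q with he
  have hed : e ≤ q := min_le_right _ _
  -- counts
  set c : F → ℕ := fun β => (L.filter (fun l => l a i0 = β)).card with hc
  have htotal : ∑ β, c β = L.card :=
    (Finset.card_eq_sum_card_fiberwise (s := L) (f := fun l => l a i0) (t := Finset.univ)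
      (fun x _ => Finset.mem_univ _)).symm
  obtain ⟨S, hScard, hSsum⟩ := top_d_sum c e hed
  -- the polynomial
  set f : MvPolynomial (Fin n) F := ∏ β ∈ S, (MvPolynomial.X i0 - MvPolynomial.C β) with hf
  have hdeg : f.totalDegree ≤ d := by
    calc f.totalDegree ≤ ∑ β ∈ S, (MvPolynomial.X i0 - MvPolynomial.C β).totalDegree :=
          MvPolynomial.totalDegree_finset_prod _ _
      _ ≤ ∑ _β ∈ S, 1 := by
          refine Finset.sum_le_sum fun β _ => ?_
          refine le_trans (MvPolynomial.totalDegree_sub _ _) ?_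
          simp [MvPolynomial.totalDegree_X, MvPolynomial.totalDegree_C]
      _ = e := by simp [hScard]
      _ ≤ d := min_le_left _ _
  have hne : MvPolynomial.aeval a f ≠ 0 := by
    rw [hf, map_prod]
    refine Finset.prod_ne_zero_iff.mpr fun β _ => ?_
    simp only [map_sub, MvPolynomial.aeval_X, MvPolynomial.aeval_C, ha]
    exact sub_ne_zero.mpr (Ne.symm (hα' β))
  -- evaluation vanishes when l a i0 ∈ S
  have hvanish : ∀ l : (Fin n → K) → (Fin n → F), l a i0 ∈ S → MvPolynomial.eval (l a) f = 0 := by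
    intro l hl
    rw [hf, map_prod]
    refine Finset.prod_eq_zero hl ?_
    simp
  -- counting
  set A := (L.filter fun l => l a i0 ∈ S).card with hA
  have hAsum : ∑ β ∈ S, c β = A := by
    rw [hA, Finset.card_eq_sum_card_fiberwise (s := L.filter fun l => l a i0 ∈ S) (f := fun l => l a i0) (t := S)
      (fun x hx => (Finset.mem_filter.mp hx).2)]
    refine Finset.sum_congr rfl fun β hβ => ?_
    rw [Finset.filter_filter]
    have heq : Finset.filter (fun l => l a i0 ∈ S ∧ l a i0 = β) L
        = Finset.filter (fun l => l a i0 = β) L := by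
      refine Finset.filter_congr fun l _ => ?_
      exact ⟨fun h => h.2, fun h => ⟨h ▸ hβ, h⟩⟩
    rw [heq]
  have hALe : A ≤ L.card := Finset.card_le_card (Finset.filter_subset _ _)
  have hfilter : (L.filter fun l => MvPolynomial.eval (l a) f ≠ 0).card ≤ L.card - A := by
    have hsub : (L.filter fun l => MvPolynomial.eval (l a) f ≠ 0) ⊆
        (L.filter fun l => l a i0 ∉ S) := by
      intro l hl
      rw [Finset.mem_filter] at hl ⊢
      exact ⟨hl.1, fun hmem => hl.2 (hvanish l hmem)⟩
    have hsplit := Finset.card_filter_add_card_filter_not (s := L)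
      (p := fun l => l a i0 ∈ S)
    have hcompl : (L.filter fun l => l a i0 ∉ S).card = L.card - A := by
      beta_reduce at hsplit
      rw [hA, ← hsplit, Nat.add_sub_cancel_left]
    calc (L.filter fun l => MvPolynomial.eval (l a) f ≠ 0).card
        ≤ (L.filter fun l => l a i0 ∉ S).card := Finset.card_le_card hsub
      _ = L.card - A := hcompl
  -- real arithmetic
  have htest := htester f hdeg a hne
  have hLpos : (0 : ℝ) < (L.card : ℝ) := by
    exact_mod_cast Finset.card_pos.mpr hL
  have h1 : (1 - ε) * (L.card : ℝ) ≤ (L.card : ℝ) - (A : ℝ) := by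
    refine le_trans htest ?_
    have : ((L.filter fun l => MvPolynomial.eval (l a) f ≠ 0).card : ℝ) ≤ ((L.card - A : ℕ) : ℝ) := by
      exact_mod_cast hfilter
    rwa [Nat.cast_sub hALe] at this
  have h2 : (e : ℝ) * (L.card : ℝ) ≤ (q : ℝ) * (A : ℝ) := by
    rw [htotal, hAsum] at hSsum
    exact_mod_cast hSsum
  have h3 : (A : ℝ) ≤ ε * (L.card : ℝ) := by nlinarith
  have h4 : (e : ℝ) / (q : ℝ) ≤ ε := by
    rw [div_le_iff₀ hq0]
    nlinarith
  -- conclude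
  rcases le_or_gt d q with hdq | hdq
  · have : e = d := min_eq_left hdq
    rw [this] at h4
    rw [div_le_iff₀ hq0] at h4 ⊢
    linarith [mul_comm ε (q : ℝ)]
  · exfalso
    have : e = q := min_eq_right hdq.le
    rw [this, div_self hq0.ne'] at h4
    linarith
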